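/- Necessity half of the Kuhn–Munkres theorem: if σ : R → P is a minimum-cost perfect matching (i.e. ∑_{i∈R} w(i, σ(i)) ≤ ∑_{i∈R} w(i, τ(i)) for every bijection τ : R → P) and (yR, yP) is a maximum-cost feasible labeling (i.e. its cost is greatest among all feasible labelings), then every edge of σ is tight with respect to (yR, yP): w(i, σ(i)) = yR(i) + yP(σ(i)) for all i ∈ R. -/

import Mathlib

/-- Necessity half of the Kuhn–Munkres theorem: if `σ` is a minimum-cost
perfect matching and `(yR, yP)` is a maximum-cost feasible labeling, then every
edge of `σ` is tight with respect to `(yR, yP)`. -/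
theorem kuhn_munkres_necessity
    {R P : Type*} [Fintype R] [Fintype P]
    (r : ℕ) (hr : 1 ≤ r) (hcardR : Fintype.card R = r) (hcardP : Fintype.card P = r)
    (w : R → P → ℝ) (hw : ∀ i j, 0 ≤ w i j)
    (σ : R → P) (hσ : Function.Bijective σ)
    (hσmin : ∀ τ : R → P, Function.Bijective τ →
      ∑ i, w i (σ i) ≤ ∑ i, w i (τ i))
    (yR : R → ℝ) (yP : P → ℝ)
    (hfeas : ∀ i j, yR i + yP j ≤ w i j)
    (hymax : ∀ (y'R : R → ℝ) (y'P : P → ℝ), (∀ i j, y'R i + y'P j ≤ w i j) →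
      (∑ i, y'R i) + (∑ j, y'P j) ≤ (∑ i, yR i) + (∑ j, yP j)) :
    ∀ i, w i (σ i) = yR i + yP (σ i) := by
  classical
  -- tight neighbors
  set t : R → Finset P := fun i => Finset.univ.filter (fun j => yR i + yP j = w i j) with ht
  -- Hall's condition holds for the tight subgraph
  have hall : ∀ s : Finset R, s.card ≤ (s.biUnion t).card := by
    by_contra hS
    push_neg at hS
    obtain ⟨S, hScard⟩ := hS
    set T := S.biUnion t with hT
    have hSne : S.Nonempty := by
      rw [← Finset.card_pos]; omega
    have hTc : (Tᶜ : Finset P).Nonempty := by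
      rw [← Finset.card_pos, Finset.card_compl]
      have := S.card_le_univ
      omega
    set E := S ×ˢ (Tᶜ : Finset P) with hE
    have hEne : E.Nonempty := hSne.product hTc
    set ε := E.inf' hEne (fun p => w p.1 p.2 - yR p.1 - yP p.2) with hε
    have hslack : ∀ i ∈ S, ∀ j ∈ (Tᶜ : Finset P), 0 < w i j - yR i - yP j := by
      intro i hi j hj
      have hjt : j ∉ t i := by
        intro hjt
        have : j ∈ T := Finset.mem_biUnion.2 ⟨i, hi, hjt⟩
        exact (Finset.mem_compl.1 hj) this
      have hne : yR i + yP j ≠ w i j := by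
        intro h; exact hjt (Finset.mem_filter.2 ⟨Finset.mem_univ _, h⟩)
      have := hfeas i j
      have := lt_of_le_of_ne this hne
      linarith
    have hεpos : 0 < ε := by
      rw [hε, Finset.lt_inf'_iff]
      rintro ⟨i, j⟩ hij
      rw [Finset.mem_product] at hij
      exact hslack i hij.1 j hij.2
    have hεle : ∀ i ∈ S, ∀ j ∈ (Tᶜ : Finset P), ε ≤ w i j - yR i - yP j := by
      intro i hi j hj
      exact Finset.inf'_le (fun p => w p.1 p.2 - yR p.1 - yP p.2)
        (show (i, j) ∈ E from Finset.mem_product.2 ⟨hi, hj⟩)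
    -- new labeling
    set y'R : R → ℝ := fun i => yR i + if i ∈ S then ε else 0 with hy'R
    set y'P : P → ℝ := fun j => yP j - if j ∈ T then ε else 0 with hy'P
    have hfeas' : ∀ i j, y'R i + y'P j ≤ w i j := by
      intro i j
      simp only [hy'R, hy'P]
      by_cases hi : i ∈ S
      · by_cases hj : j ∈ T
        · simp [hi, hj]; linarith [hfeas i j]
        · have := hεle i hi j (Finset.mem_compl.2 hj)
          simp [hi, hj]; linarith
      · by_cases hj : j ∈ T <;> simp [hi, hj] <;> [linarith [hfeas i j]; exact hfeas i j]
    have hcost := hymax y'R y'P hfeas'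
    have h1 : (∑ i, y'R i) = (∑ i, yR i) + S.card * ε := by
      simp only [hy'R, Finset.sum_add_distrib]
      congr 1
      rw [Finset.sum_ite_mem, Finset.univ_inter, Finset.sum_const, nsmul_eq_mul]
    have h2 : (∑ j, y'P j) = (∑ j, yP j) - T.card * ε := by
      simp only [hy'P, Finset.sum_sub_distrib]
      congr 1
      rw [Finset.sum_ite_mem, Finset.univ_inter, Finset.sum_const, nsmul_eq_mul]
    rw [h1, h2] at hcost
    have hlt : (T.card : ℝ) < S.card := by exact_mod_cast hScard
    nlinarith
  -- Hall gives a perfect matching in the tight subgraph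
  obtain ⟨τ, hτinj, hτt⟩ := (Finset.all_card_le_biUnion_card_iff_exists_injective t).1 hall
  have hτbij : Function.Bijective τ :=
    (Fintype.bijective_iff_injective_and_card τ).2 ⟨hτinj, by rw [hcardR, hcardP]⟩
  have hτtight : ∀ i, yR i + yP (τ i) = w i (τ i) := by
    intro i
    have := hτt i
    simp only [ht, Finset.mem_filter] at this
    exact this.2
  -- cost of τ equals cost of labeling
  have hsumP : ∀ (f : R → P), Function.Bijective f → (∑ i, yP (f i)) = ∑ j, yP j := by
    intro f hf
    exact Fintype.sum_bijective f hf _ _ (fun _ => rfl)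
  have hτcost : (∑ i, w i (τ i)) = (∑ i, yR i) + (∑ j, yP j) := by
    rw [← hsumP τ hτbij, ← Finset.sum_add_distrib]
    exact Finset.sum_congr rfl (fun i _ => (hτtight i).symm)
  -- sandwich
  have hweak : (∑ i, yR i) + (∑ j, yP j) ≤ ∑ i, w i (σ i) := by
    rw [← hsumP σ hσ, ← Finset.sum_add_distrib]
    exact Finset.sum_le_sum (fun i _ => hfeas i (σ i))
  have hmin := hσmin τ hτbij
  have heq : (∑ i, (w i (σ i) - (yR i + yP (σ i)))) = 0 := by
    rw [Finset.sum_sub_distrib, Finset.sum_add_distrib, hsumP σ hσ]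
    linarith [hτcost ▸ hmin]
  have hnn : ∀ i ∈ Finset.univ, 0 ≤ w i (σ i) - (yR i + yP (σ i)) := by
    intro i _; linarith [hfeas i (σ i)]
  intro i
  have := (Finset.sum_eq_zero_iff_of_nonneg hnn).1 heq i (Finset.mem_univ i)
  linarith
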